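/- Fix a channel coefficient h ∈ ℂ with h ≠ 0 and constants a > 0, b > 0. Then the MVU filter f_MVU = x/‖x‖² is not a minimizer of the zeroth-order error probability: there exists a nonzero filter f ∈ ℂ^B with P0(f) < P0(f_MVU). (Proposition 6: the MVU estimator is not optimal for minimizing [P_e]_0 given the true channel.) -/

import Mathlib

open MeasureTheory

/-- `φ(f) = fᴴ x = Σᵢ conj(fᵢ)·xᵢ`. -/
noncomputable def phi {B : ℕ} (x f : Fin B → ℂ) : ℂ :=
  ∑ i, (starRingEnd ℂ) (f i) * x i

/-- Squared Euclidean norm `‖f‖² = Σᵢ |fᵢ|²`. -/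
noncomputable def nsq {B : ℕ} (f : Fin B → ℂ) : ℝ :=
  ∑ i, Complex.normSq (f i)

/-- Zeroth-order symbol-estimate MSE of the ZF equalizer, deterministic channel `h`. -/
noncomputable def Mdc {B : ℕ} (σx2 σw2 : ℝ) (h : ℂ) (x f : Fin B → ℂ) : ℝ :=
  (σx2 * (Complex.normSq h * Complex.normSq (phi x f - 1) + σw2 * nsq f) + σw2) /
    (Complex.normSq h * Complex.normSq (phi x f) + σw2 * nsq f)

/-- Standard Gaussian tail function `Q(u) = (1/√(2π)) ∫_u^∞ e^{−t²/2} dt`. -/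
noncomputable def Qfun (u : ℝ) : ℝ :=
  (Real.sqrt (2 * Real.pi))⁻¹ * ∫ t in Set.Ioi u, Real.exp (-t ^ 2 / 2)

/-- Zeroth-order error probability `[P_e]₀ = a·Q(b·√(σx²/M_dc(f)))`. -/
noncomputable def P0dc {B : ℕ} (a b σx2 σw2 : ℝ) (h : ℂ) (x f : Fin B → ℂ) : ℝ :=
  a * Qfun (b * Real.sqrt (σx2 / Mdc σx2 σw2 h x f))

/-- The MVU channel-estimating filter `f_MVU = x / ‖x‖²`. -/
noncomputable def fMVU {B : ℕ} (x : Fin B → ℂ) : Fin B → ℂ :=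
  fun i => x i / (nsq x : ℂ)

lemma gauss_integrable : Integrable (fun t : ℝ => Real.exp (-t ^ 2 / 2)) := by
  have := integrable_exp_neg_mul_sq (b := (1/2 : ℝ)) (by norm_num)
  convert this using 2 with t
  ring_nf

lemma Qfun_strictAnti : StrictAnti Qfun := by
  intro u v huv
  have hint := gauss_integrable
  unfold Qfun
  have hpi : (0:ℝ) < (Real.sqrt (2 * Real.pi))⁻¹ := by
    rw [inv_pos]
    exact Real.sqrt_pos.2 (by positivity)
  apply mul_lt_mul_of_pos_left _ hpi
  have hsplit : (∫ t in Set.Ioi u, Real.exp (-t ^ 2 / 2))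
      = (∫ t in Set.Ioc u v, Real.exp (-t ^ 2 / 2))
        + ∫ t in Set.Ioi v, Real.exp (-t ^ 2 / 2) := by
    rw [← setIntegral_union (Set.Ioc_disjoint_Ioi le_rfl) measurableSet_Ioi
      hint.integrableOn hint.integrableOn, Set.Ioc_union_Ioi_eq_Ioi huv.le]
  rw [hsplit]
  have hpos : 0 < ∫ t in Set.Ioc u v, Real.exp (-t ^ 2 / 2) := by
    refine (setIntegral_pos_iff_support_of_nonneg_ae ?_ hint.integrableOn).2 ?_
    · filter_upwards with t using (Real.exp_pos _).le
    · have : (Function.support fun t : ℝ => Real.exp (-t ^ 2 / 2)) = Set.univ := by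
        ext t; simp [Function.support, (Real.exp_pos _).ne']
      rw [this, Set.univ_inter, Real.volume_Ioc]
      simp [huv]
  linarith

lemma nsq_pos {B : ℕ} {x : Fin B → ℂ} (hx : x ≠ 0) : 0 < nsq x := by
  rcases Function.ne_iff.1 hx with ⟨i, hi⟩
  have : 0 < Complex.normSq (x i) := by
    simpa [Complex.normSq_pos] using hi
  refine lt_of_lt_of_le this ?_
  exact Finset.single_le_sum (fun j _ => Complex.normSq_nonneg (x j)) (Finset.mem_univ i)

/-- Proposition 6: the MVU estimator is not optimal for minimizing the
zeroth-order error probability `[P_e]₀` given the true channel. -/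
theorem mvu_not_optimal_zeroth_order_pe
    (B : ℕ) (hB : 1 ≤ B) (x : Fin B → ℂ) (hx : x ≠ 0)
    (σx2 σw2 : ℝ) (hσx : 0 < σx2) (hσw : 0 < σw2)
    (h : ℂ) (hh : h ≠ 0) (a b : ℝ) (ha : 0 < a) (hb : 0 < b) :
    ∃ f : Fin B → ℂ, f ≠ 0 ∧
      P0dc a b σx2 σw2 h x f < P0dc a b σx2 σw2 h x (fMVU x) := by
  set N := nsq x with hN
  have hNpos : 0 < N := nsq_pos hx
  set A := Complex.normSq h with hA
  have hApos : 0 < A := Complex.normSq_pos.2 hh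
  set c : ℝ := 1 + σw2 / (σx2 * A) with hc
  have hc1 : 1 < c := by
    have h0 : 0 < σw2 / (σx2 * A) := by positivity
    rw [hc]; linarith
  have hkey : σx2 * A * (c - 1) = σw2 := by
    rw [hc, add_sub_cancel_left]
    field_simp [hσx.ne', hApos.ne']
  refine ⟨fun i => (c : ℂ) * fMVU x i, ?_, ?_⟩
  · rcases Function.ne_iff.1 hx with ⟨i, hi⟩
    intro hf
    have := congrFun hf i
    simp only [fMVU, Pi.zero_apply, mul_eq_zero, div_eq_zero_iff] at this
    rcases this with h1 | h2
    · exact absurd (by exact_mod_cast h1) (by positivity : (0:ℝ) < c).ne'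
    · rcases h2 with h2 | h2
      · exact hi h2
      · exact hNpos.ne' (by exact_mod_cast h2)
  · -- compute phi and nsq for both filters
    have hphi1 : phi x (fMVU x) = 1 := by
      unfold phi fMVU
      have : ∀ i : Fin B, (starRingEnd ℂ) (x i / (N:ℂ)) * x i
          = (Complex.normSq (x i) : ℝ) / (N:ℂ) := by
        intro i
        rw [map_div₀, Complex.conj_ofReal, div_mul_eq_mul_div,
          mul_comm ((starRingEnd ℂ) (x i)), Complex.mul_conj]
      rw [Finset.sum_congr rfl (fun i _ => this i), ← Finset.sum_div]
      rw [← Complex.ofReal_sum]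
      rw [div_eq_one_iff_eq (by exact_mod_cast hNpos.ne')]
      norm_cast
    have hnsq1 : nsq (fMVU x) = 1 / N := by
      unfold nsq fMVU
      have : ∀ i : Fin B, Complex.normSq (x i / (N:ℂ)) = Complex.normSq (x i) / N ^ 2 := by
        intro i
        rw [Complex.normSq_div, Complex.normSq_ofReal]
        ring_nf
      rw [Finset.sum_congr rfl (fun i _ => this i), ← Finset.sum_div]
      rw [show (∑ i, Complex.normSq (x i)) = N from rfl]
      field_simp
    have hphic : phi x (fun i => (c:ℂ) * fMVU x i) = (c:ℂ) := by
      unfold phi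
      have : ∀ i : Fin B, (starRingEnd ℂ) ((c:ℂ) * fMVU x i) * x i
          = (c:ℂ) * ((starRingEnd ℂ) (fMVU x i) * x i) := by
        intro i
        simp [mul_assoc, Complex.conj_ofReal]
      rw [Finset.sum_congr rfl (fun i _ => this i), ← Finset.mul_sum]
      have := hphi1
      unfold phi at this
      rw [this, mul_one]
    have hnsqc : nsq (fun i => (c:ℂ) * fMVU x i) = c ^ 2 * (1 / N) := by
      unfold nsq
      have : ∀ i : Fin B, Complex.normSq ((c:ℂ) * fMVU x i)
          = c ^ 2 * Complex.normSq (fMVU x i) := by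
        intro i
        rw [Complex.normSq_mul, Complex.normSq_ofReal]; ring
      rw [Finset.sum_congr rfl (fun i _ => this i), ← Finset.mul_sum]
      have := hnsq1
      unfold nsq at this
      rw [this]
    -- values of Mdc
    have hM1 : Mdc σx2 σw2 h x (fMVU x)
        = (σx2 * (σw2 * (1 / N)) + σw2) / (A + σw2 * (1 / N)) := by
      unfold Mdc
      rw [hphi1, hnsq1]
      simp [← hA]
    have hMc : Mdc σx2 σw2 h x (fun i => (c:ℂ) * fMVU x i)
        = (σx2 * (A * (c - 1) ^ 2 + σw2 * (c ^ 2 * (1 / N))) + σw2)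
          / (A * c ^ 2 + σw2 * (c ^ 2 * (1 / N))) := by
      unfold Mdc
      rw [hphic, hnsqc]
      have h1 : Complex.normSq ((c:ℂ) - 1) = (c - 1) ^ 2 := by
        rw [show ((c:ℂ) - 1) = ((c - 1 : ℝ) : ℂ) by push_cast; ring,
          Complex.normSq_ofReal]; ring
      have h2 : Complex.normSq ((c:ℂ)) = c ^ 2 := by
        rw [Complex.normSq_ofReal]; ring
      rw [h1, h2, ← hA]
    set s : ℝ := σw2 * (1 / N) with hs
    have hspos : 0 < s := by positivity
    have hden1 : 0 < A + s := by linarith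
    have hdenc : 0 < A * c ^ 2 + s * c ^ 2 := by nlinarith
    have hnum1 : 0 < σx2 * s + σw2 := by positivity
    have hnumc : 0 < σx2 * (A * (c - 1) ^ 2 + s * c ^ 2) + σw2 := by
      nlinarith [mul_nonneg hApos.le (sq_nonneg (c - 1)), mul_nonneg hspos.le (sq_nonneg c)]
    have hMlt : Mdc σx2 σw2 h x (fun i => (c:ℂ) * fMVU x i)
        < Mdc σx2 σw2 h x (fMVU x) := by
      rw [hM1, hMc]
      rw [show σw2 * (c ^ 2 * (1 / N)) = s * c ^ 2 by rw [hs]; ring]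
      rw [div_lt_div_iff₀ hdenc hden1]
      have hkey2 : σx2 * A * (c - 1) ^ 2 = σw2 * (c - 1) := by
        linear_combination (c - 1) * hkey
      have hdiff : (σx2 * s + σw2) * (A * c ^ 2 + s * c ^ 2)
          - (σx2 * (A * (c - 1) ^ 2 + s * c ^ 2) + σw2) * (A + s)
          = (A + s) * (σw2 * (c - 1) * c) := by
        linear_combination (-(A + s)) * hkey2
      have hposd : 0 < (A + s) * (σw2 * (c - 1) * c) :=
        mul_pos hden1 (mul_pos (mul_pos hσw (sub_pos.2 hc1)) (by linarith : (0:ℝ) < c))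
      linarith
    have hMcpos : 0 < Mdc σx2 σw2 h x (fun i => (c:ℂ) * fMVU x i) := by
      rw [hMc]
      rw [show σw2 * (c ^ 2 * (1 / N)) = s * c ^ 2 by rw [hs]; ring]
      exact div_pos hnumc hdenc
    have hM1pos : 0 < Mdc σx2 σw2 h x (fMVU x) := hMcpos.trans hMlt
    -- conclude via monotonicity
    unfold P0dc
    apply mul_lt_mul_of_pos_left _ ha
    apply Qfun_strictAnti
    apply mul_lt_mul_of_pos_left _ hb
    apply Real.sqrt_lt_sqrt (by positivity)
    exact div_lt_div_of_pos_left hσx hMcpos hMlt
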